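/- Let X be a real Banach space, let L : X → X be a continuous linear map with operator norm ‖L‖_{L(X)} := sup_{‖x‖=1} ‖Lx‖ satisfying ‖L‖_{L(X)} < 1, and let B : X × X → X be a continuous bilinear map with norm ‖B‖_{L(X×X)} := sup_{‖x‖=‖y‖=1} ‖B(x,y)‖ satisfying ‖B‖_{L(X×X)} > 0. If x₀ ∈ X satisfies ‖x₀‖ < (1 − ‖L‖_{L(X)})² / (4‖B‖_{L(X×X)}), then the equation x = x₀ + Lx + B(x,x) has exactly one solution x in the closed ball of center 0 and radius (1 − ‖L‖_{L(X)}) / (2‖B‖_{L(X×X)}) in X. -/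

import Mathlib

set_option maxHeartbeats 1000000 in
/-- **Fixed point lemma (Chemin).** Let `X` be a real Banach space, `L : X → X` a
continuous linear map with operator norm `< 1`, and `B : X × X → X` a continuous
bilinear map with positive norm. If `‖x₀‖ < (1 - ‖L‖)² / (4‖B‖)`, then the equation
`x = x₀ + L x + B (x, x)` has exactly one solution in the closed ball of center `0`
and radius `(1 - ‖L‖) / (2‖B‖)`. -/
theorem fixed_point_lemma
    {X : Type*} [NormedAddCommGroup X] [NormedSpace ℝ X] [CompleteSpace X]
    (L : X →L[ℝ] X) (B : X →L[ℝ] X →L[ℝ] X)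
    (hL : ‖L‖ < 1) (hB : 0 < ‖B‖)
    (x₀ : X) (hx₀ : ‖x₀‖ < (1 - ‖L‖) ^ 2 / (4 * ‖B‖)) :
    ∃! x : X, ‖x‖ ≤ (1 - ‖L‖) / (2 * ‖B‖) ∧ x = x₀ + L x + B x x := by
  set l := ‖L‖ with hl
  set b := ‖B‖ with hb
  have hl0 : 0 ≤ l := norm_nonneg _
  have h1l : 0 < 1 - l := by linarith
  have hx0' : 4 * b * ‖x₀‖ < (1 - l) ^ 2 := by
    rw [lt_div_iff₀ (by positivity)] at hx₀; linarith
  set f : X → X := fun x => x₀ + L x + B x x with hf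
  -- difference estimate
  have hdiff : ∀ x y : X, ‖f x - f y‖ ≤ (l + b * (‖x‖ + ‖y‖)) * ‖x - y‖ := by
    intro x y
    have key : f x - f y = L (x - y) + (B x (x - y) + B (x - y) y) := by
      simp only [hf, map_sub, ContinuousLinearMap.sub_apply]
      abel
    rw [key]
    have h1 : ‖L (x - y)‖ ≤ l * ‖x - y‖ := L.le_opNorm _
    have h2 : ‖B x (x - y)‖ ≤ b * ‖x‖ * ‖x - y‖ := B.le_opNorm₂ _ _
    have h3 : ‖B (x - y) y‖ ≤ b * ‖x - y‖ * ‖y‖ := B.le_opNorm₂ _ _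
    calc ‖L (x - y) + (B x (x - y) + B (x - y) y)‖
        ≤ ‖L (x - y)‖ + (‖B x (x - y)‖ + ‖B (x - y) y‖) :=
          (norm_add_le _ _).trans (by gcongr; exact norm_add_le _ _)
      _ ≤ (l + b * (‖x‖ + ‖y‖)) * ‖x - y‖ := by nlinarith [norm_nonneg (x - y)]
  -- norm estimate
  have hnorm : ∀ x : X, ‖f x‖ ≤ ‖x₀‖ + l * ‖x‖ + b * ‖x‖ ^ 2 := by
    intro x
    have h1 : ‖L x‖ ≤ l * ‖x‖ := L.le_opNorm _
    have h2 : ‖B x x‖ ≤ b * ‖x‖ * ‖x‖ := B.le_opNorm₂ _ _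
    calc ‖f x‖ ≤ ‖x₀‖ + ‖L x‖ + ‖B x x‖ := by
          simpa [hf] using norm_add₃_le (a := x₀) (b := L x) (c := B x x)
      _ ≤ ‖x₀‖ + l * ‖x‖ + b * ‖x‖ ^ 2 := by nlinarith
  set r : ℝ := (1 - l) / (2 * b) with hr
  set r' : ℝ := 2 * ‖x₀‖ / (1 - l) with hr'
  have hr'0 : 0 ≤ r' := by positivity
  have hr'r : r' < r := by
    rw [hr', hr, div_lt_div_iff₀ h1l (by positivity)]
    nlinarith
  have h2br : 2 * b * r = 1 - l := by
    rw [hr]; field_simp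
  have h2br' : 4 * b * ‖x₀‖ = 2 * b * r' * (1 - l) := by
    rw [hr']; field_simp; ring
  -- f maps closed ball r' into itself
  set s : Set X := Metric.closedBall 0 r' with hs
  have hmaps : Set.MapsTo f s s := by
    intro x hx
    simp only [hs, Metric.mem_closedBall, dist_zero_right] at hx ⊢
    have h1 := hnorm x
    have hxn : 0 ≤ ‖x‖ := norm_nonneg x
    have hbr : b * ‖x‖ ^ 2 ≤ b * r' ^ 2 := by gcongr
    have hbr2 : b * r' ^ 2 ≤ ‖x₀‖ := by
      rw [hr', div_pow, ← mul_div_assoc, div_le_iff₀ (by positivity)]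
      nlinarith [norm_nonneg x₀]
    have hlast : ‖x₀‖ + l * r' + ‖x₀‖ = r' := by
      rw [hr']; field_simp; ring
    calc ‖f x‖ ≤ ‖x₀‖ + l * ‖x‖ + b * ‖x‖ ^ 2 := h1
      _ ≤ ‖x₀‖ + l * r' + ‖x₀‖ := by nlinarith
      _ = r' := hlast
  -- contraction constant
  set K : NNReal := Real.toNNReal (l + 2 * b * r') with hK
  have hKc : (K : ℝ) = l + 2 * b * r' := Real.coe_toNNReal _ (by positivity)
  have hK1 : (K : ℝ) < 1 := by
    rw [hKc]
    have : 2 * b * r' < 1 - l := by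
      have hb' : 0 < 2 * b * r' * (1 - l) + l * (1 - l) → True := fun _ => trivial
      nlinarith [h2br']
    linarith
  have hlip : LipschitzOnWith K f s := by
    apply LipschitzOnWith.of_dist_le_mul
    intro x hx y hy
    simp only [hs, Metric.mem_closedBall, dist_zero_right] at hx hy
    rw [dist_eq_norm, dist_eq_norm]
    calc ‖f x - f y‖ ≤ (l + b * (‖x‖ + ‖y‖)) * ‖x - y‖ := hdiff x y
      _ ≤ (K : ℝ) * ‖x - y‖ := by
          apply mul_le_mul_of_nonneg_right _ (norm_nonneg _)
          rw [hKc]; nlinarith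
  have hcontr : ContractingWith K (hmaps.restrict f s s) := by
    constructor
    · exact_mod_cast hK1
    · exact hlip.mapsToRestrict hmaps
  have hsc : IsComplete s := (Metric.isClosed_closedBall).isComplete
  have h0s : (0 : X) ∈ s := by
    simp only [hs, Metric.mem_closedBall, dist_self]; exact hr'0
  obtain ⟨x, hxs, hfix, -, -⟩ :=
    ContractingWith.exists_fixedPoint' hsc hmaps hcontr h0s (edist_ne_top _ _)
  simp only [hs, Metric.mem_closedBall, dist_zero_right] at hxs
  refine ⟨x, ⟨hxs.trans hr'r.le, hfix.symm⟩, ?_⟩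
  rintro y ⟨hyr, hy⟩
  -- uniqueness
  have hd : ‖y - x‖ ≤ (l + b * (‖y‖ + ‖x‖)) * ‖y - x‖ := by
    have := hdiff y x
    rw [show f y = y from hy.symm, show f x = x from hfix] at this
    exact this
  have hc : l + b * (‖y‖ + ‖x‖) < 1 := by
    have h1 : b * ‖x‖ ≤ b * r' := mul_le_mul_of_nonneg_left hxs hB.le
    have h2 : b * ‖y‖ ≤ b * r := mul_le_mul_of_nonneg_left hyr hB.le
    have h3 : b * r' < b * r := (mul_lt_mul_iff_right₀ hB).mpr hr'r
    nlinarith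
  have h0 : ‖y - x‖ ≤ 0 := by nlinarith [norm_nonneg (y - x)]
  have : y - x = 0 := norm_le_zero_iff.mp h0
  exact sub_eq_zero.mp this
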